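/- More generally, for α, β > 0 the function f(λ) = (2/Γ(α)) (βλ)^{α/2} K_α(2√(βλ)) satisfies λ f''(λ) + (1-α) f'(λ) - β f(λ) = 0, and f is the Laplace transform ∫_0^∞ e^{-λx} g(x) dx of the inverse gamma density g(x) = (β^α/Γ(α)) x^{-α-1} e^{-β/x}. -/

import Mathlib

noncomputable section

/-- The modified Bessel function of the second kind of order `α`, via the integral
representation `K_α(z) = (1/2)(z/2)^α ∫₀^∞ t^{-α-1} exp(-t - z²/(4t)) dt`. -/
def besselK (α z : ℝ) : ℝ :=
  (1 / 2) * (z / 2) ^ α *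
    ∫ t in Set.Ioi (0 : ℝ), t ^ (-α - 1) * Real.exp (-t - z ^ 2 / (4 * t))

open MeasureTheory Set Filter

namespace InvGammaAux

/-- `exp (-β/x) ≤ (n!/βⁿ) xⁿ` for `x > 0`. -/
lemma exp_neg_div_le {β : ℝ} (hβ : 0 < β) (n : ℕ) {x : ℝ} (hx : 0 < x) :
    Real.exp (-β / x) ≤ n.factorial / β ^ n * x ^ n := by
  have h := Real.pow_div_factorial_le_exp (x := β / x) (div_nonneg hβ.le hx.le) n
  have hpos : (0:ℝ) < (β / x) ^ n / n.factorial := by positivity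
  have h2 : Real.exp (-β / x) = (Real.exp (β / x))⁻¹ := by
    rw [neg_div, Real.exp_neg]
  rw [h2]
  have h3 : (Real.exp (β / x))⁻¹ ≤ ((β / x) ^ n / n.factorial)⁻¹ :=
    inv_anti₀ hpos h
  refine h3.trans_eq ?_
  rw [div_pow]
  field_simp

lemma contOn (β p lam : ℝ) :
    ContinuousOn (fun x : ℝ => x ^ p * Real.exp (-β / x) * Real.exp (-lam * x)) (Ioi 0) := by
  apply ContinuousOn.mul
  apply ContinuousOn.mul
  · exact fun x hx => (Real.continuousAt_rpow_const x p (Or.inl (ne_of_gt hx))).continuousWithinAt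
  · exact Real.continuous_exp.comp_continuousOn
      (continuousOn_const.div continuousOn_id fun x hx => ne_of_gt hx)
  · exact (Real.continuous_exp.comp (continuous_const.mul continuous_id)).continuousOn

/-- Integrability of `x^p exp(-β/x) exp(-λx)` on `(0,∞)`. -/
lemma integrable_aux {β : ℝ} (hβ : 0 < β) (p : ℝ) {lam : ℝ} (hlam : 0 < lam) :
    IntegrableOn (fun x : ℝ => x ^ p * Real.exp (-β / x) * Real.exp (-lam * x)) (Ioi 0) := by
  set n : ℕ := ⌈|p|⌉₊ with hn'
  have hn : (0:ℝ) ≤ p + n := by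
    have h1 : |p| ≤ (n : ℝ) := Nat.le_ceil |p|
    have h2 : -|p| ≤ p := neg_abs_le p
    linarith
  have hmaj : IntegrableOn
      (fun x : ℝ => (n.factorial : ℝ) / β ^ n * (x ^ (p + n) * Real.exp (-lam * x)))
      (Ioi 0) := by
    apply Integrable.const_mul
    have := integrableOn_rpow_mul_exp_neg_mul_rpow (p := 1) (s := p + n) (by linarith) zero_lt_one hlam
    simpa [Real.rpow_one, IntegrableOn] using this
  refine Integrable.mono' hmaj ((contOn β p lam).aestronglyMeasurable measurableSet_Ioi) ?_
  filter_upwards [ae_restrict_mem measurableSet_Ioi] with x hx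
  have hx0 : (0:ℝ) < x := hx
  have h1 : Real.exp (-β / x) ≤ n.factorial / β ^ n * x ^ n := exp_neg_div_le hβ n hx0
  have hxp : (0:ℝ) ≤ x ^ p := Real.rpow_nonneg hx0.le p
  rw [Real.norm_eq_abs, abs_of_nonneg (by positivity)]
  have h2 : x ^ (p + n) = x ^ p * x ^ n := by
    rw [← Real.rpow_natCast x n, ← Real.rpow_add hx0]
  calc x ^ p * Real.exp (-β / x) * Real.exp (-lam * x)
      ≤ x ^ p * (n.factorial / β ^ n * x ^ n) * Real.exp (-lam * x) := by
        gcongr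
    _ = n.factorial / β ^ n * (x ^ (p + n) * Real.exp (-lam * x)) := by rw [h2]; ring

/-- Differentiation under the integral sign. -/
lemma hasDerivAt_G {β : ℝ} (hβ : 0 < β) (p : ℝ) {lam : ℝ} (hlam : 0 < lam) :
    HasDerivAt (fun l => ∫ x in Ioi (0:ℝ), x ^ p * Real.exp (-β / x) * Real.exp (-l * x))
      (-∫ x in Ioi (0:ℝ), x ^ (p + 1) * Real.exp (-β / x) * Real.exp (-lam * x)) lam := by
  have key := hasDerivAt_integral_of_dominated_loc_of_deriv_le
    (μ := volume.restrict (Ioi (0:ℝ)))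
    (F := fun (l : ℝ) (x : ℝ) => x ^ p * Real.exp (-β / x) * Real.exp (-l * x))
    (F' := fun (l : ℝ) (x : ℝ) => -(x ^ (p + 1) * Real.exp (-β / x) * Real.exp (-l * x)))
    (x₀ := lam)
    (bound := fun x => x ^ (p + 1) * Real.exp (-β / x) * Real.exp (-(lam/2) * x))
    (Metric.ball_mem_nhds lam (half_pos hlam))
    (Eventually.of_forall fun l => (contOn β p l).aestronglyMeasurable measurableSet_Ioi)
    (integrable_aux hβ p hlam)
    (((contOn β (p+1) lam).aestronglyMeasurable measurableSet_Ioi).neg)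
    ?_ (integrable_aux hβ (p+1) (half_pos hlam)) ?_
  · rcases key with ⟨-, h⟩
    rw [integral_neg] at h
    exact h
  · -- bound
    filter_upwards [ae_restrict_mem measurableSet_Ioi] with x hx l hl
    have hx0 : (0:ℝ) < x := hx
    have hl2 : lam / 2 ≤ l := by
      rw [Metric.mem_ball, Real.dist_eq, abs_lt] at hl
      linarith
    rw [norm_neg, Real.norm_eq_abs, abs_of_nonneg (by positivity)]
    gcongr
  · -- differentiability
    filter_upwards [ae_restrict_mem measurableSet_Ioi] with x hx l _
    have hx0 : (0:ℝ) < x := hx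
    have h1 : HasDerivAt (fun l : ℝ => -l * x) (-x) l := by
      simpa using (hasDerivAt_id l).neg.mul_const x
    have hd : HasDerivAt (fun l : ℝ => Real.exp (-l * x)) (Real.exp (-l * x) * -x) l := h1.exp
    have := hd.const_mul (x ^ p * Real.exp (-β / x))
    refine this.congr_deriv ?_
    rw [Real.rpow_add_one hx0.ne' p]
    ring

end InvGammaAux

open InvGammaAux

/-- **(Section 7.4, inverse gamma Laplace transform and its ODE.)**  For `α, β > 0`,
the function `f(λ) = (2/Γ(α))(βλ)^{α/2} K_α(2√(βλ))` satisfies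
`λ f''(λ) + (1-α) f'(λ) - β f(λ) = 0` for `λ > 0`, and `f` is the Laplace transform
of the inverse gamma density `g(x) = (β^α/Γ(α)) x^{-α-1} e^{-β/x}`. -/
theorem inverse_gamma_laplace_ODE (α β : ℝ) (hα : 0 < α) (hβ : 0 < β)
    (f g : ℝ → ℝ)
    (hf : ∀ lam : ℝ, f lam = (2 / Real.Gamma α) * (β * lam) ^ (α / 2) *
      besselK α (2 * Real.sqrt (β * lam)))
    (hg : ∀ x : ℝ, g x = β ^ α / Real.Gamma α * x ^ (-α - 1) * Real.exp (-β / x)) :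
    (∀ lam : ℝ, 0 < lam →
      lam * deriv (deriv f) lam + (1 - α) * deriv f lam - β * f lam = 0) ∧
    ∀ lam : ℝ, 0 < lam →
      f lam = ∫ x in Set.Ioi (0 : ℝ), Real.exp (-lam * x) * g x := by
  -- the basic function G p l
  set G : ℝ → ℝ → ℝ :=
    fun p l => ∫ x in Set.Ioi (0:ℝ), x ^ p * Real.exp (-β / x) * Real.exp (-l * x) with hG
  -- representation of f
  have hrep : ∀ lam : ℝ, 0 < lam → f lam = β ^ α / Real.Gamma α * G (-α - 1) lam := by
    intro lam hlam
    rw [hf, besselK]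
    set s : ℝ := β * lam with hs'
    have hs : 0 < s := mul_pos hβ hlam
    have hsqrt : (2 * Real.sqrt s / 2) = Real.sqrt s := by ring
    have hsq : (2 * Real.sqrt s) ^ 2 = 4 * s := by
      rw [mul_pow, Real.sq_sqrt hs.le]; ring
    have hpow : Real.sqrt s ^ α = s ^ (α / 2) := by
      rw [Real.sqrt_eq_rpow, ← Real.rpow_mul hs.le, show (1/2 : ℝ) * α = α/2 by ring]
    -- rewrite the exponent inside the Bessel integral
    have hint1 : (∫ t in Set.Ioi (0:ℝ), t ^ (-α - 1) *
        Real.exp (-t - (2 * Real.sqrt s) ^ 2 / (4 * t))) =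
        ∫ t in Set.Ioi (0:ℝ), t ^ (-α - 1) * Real.exp (-t - s / t) := by
      congr 1
      funext t
      rw [hsq, mul_div_mul_left s t (by norm_num : (4:ℝ) ≠ 0)]
    -- change of variables t = lam * x
    have hsub := MeasureTheory.integral_comp_mul_left_Ioi
      (fun t : ℝ => t ^ (-α - 1) * Real.exp (-t - s / t)) 0 hlam
    rw [mul_zero] at hsub
    have hsub2 : (∫ t in Set.Ioi (0:ℝ), t ^ (-α - 1) * Real.exp (-t - s / t)) =
        lam * ∫ x in Set.Ioi (0:ℝ),
          (lam * x) ^ (-α - 1) * Real.exp (-(lam * x) - s / (lam * x)) := by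
      rw [hsub, smul_eq_mul, ← mul_assoc, mul_inv_cancel₀ hlam.ne', one_mul]
    -- pointwise simplification of the substituted integrand
    have hpt : (∫ x in Set.Ioi (0:ℝ),
        (lam * x) ^ (-α - 1) * Real.exp (-(lam * x) - s / (lam * x))) =
        lam ^ (-α - 1) * G (-α - 1) lam := by
      rw [hG, ← MeasureTheory.integral_const_mul]
      apply MeasureTheory.setIntegral_congr_fun measurableSet_Ioi
      intro x hx
      have hx0 : (0:ℝ) < x := hx
      have h1 : (lam * x) ^ (-α - 1) = lam ^ (-α - 1) * x ^ (-α - 1) :=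
        Real.mul_rpow hlam.le hx0.le
      have h2 : s / (lam * x) = β / x := by
        rw [hs', mul_comm β lam, mul_div_mul_left β x hlam.ne']
      have h3 : Real.exp (-(lam * x) - β / x) = Real.exp (-β / x) * Real.exp (-lam * x) := by
        rw [← Real.exp_add]; ring_nf
      simp only [h1, h2, h3]
      ring
    rw [hsqrt, hpow, hint1, hsub2, hpt]
    -- collect the scalar factors
    have h1 : s ^ (α/2) * s ^ (α/2) = β ^ α * lam ^ α := by
      rw [← Real.rpow_add hs, show α/2 + α/2 = α by ring, hs',
        Real.mul_rpow hβ.le hlam.le]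
    have h2 : lam * lam ^ (-α - 1) = lam ^ (-α) := by
      nth_rewrite 1 [← Real.rpow_one lam]
      rw [← Real.rpow_add hlam, show (1:ℝ) + (-α - 1) = -α by ring]
    have h3 : lam ^ α * lam ^ (-α) = 1 := by
      rw [← Real.rpow_add hlam]; simp
    have key : s ^ (α/2) * s ^ (α/2) * (lam * lam ^ (-α - 1)) = β ^ α := by
      rw [h1, h2, mul_assoc, h3, mul_one]
    linear_combination (G (-α - 1) lam / Real.Gamma α) * key
  -- FTC identity
  have hftc : ∀ lam : ℝ, 0 < lam →
      (1 - α) * G (-α) lam + β * G (-α - 1) lam - lam * G (1 - α) lam = 0 := by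
    intro lam hlam
    set φ : ℝ → ℝ := fun x => if 0 < x then
      x ^ (1 - α) * Real.exp (-β / x) * Real.exp (-lam * x) else 0 with hφ
    set ψ : ℝ → ℝ := fun x =>
      (1 - α) * (x ^ (-α) * Real.exp (-β / x) * Real.exp (-lam * x))
      + β * (x ^ (-α - 1) * Real.exp (-β / x) * Real.exp (-lam * x))
      - lam * (x ^ (1 - α) * Real.exp (-β / x) * Real.exp (-lam * x)) with hψ
    have hφ0 : φ 0 = 0 := by simp [hφ]
    have hderiv : ∀ x ∈ Ioi (0:ℝ), HasDerivAt φ (ψ x) x := by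
      intro x hx
      have hx0 : (0:ℝ) < x := hx
      have h1 : HasDerivAt (fun y : ℝ => y ^ (1 - α)) ((1 - α) * x ^ (1 - α - 1)) x :=
        Real.hasDerivAt_rpow_const (Or.inl hx0.ne')
      have hinv : HasDerivAt (fun y : ℝ => -β / y) (β / x ^ 2) x := by
        have h := (hasDerivAt_inv hx0.ne').const_mul (-β)
        have e : (fun y : ℝ => -β / y) = fun y => -β * y⁻¹ := by funext y; ring
        rw [e, show β / x ^ 2 = -β * -(x ^ 2)⁻¹ by ring]
        exact h
      have h2 : HasDerivAt (fun y : ℝ => Real.exp (-β / y))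
          (Real.exp (-β / x) * (β / x ^ 2)) x := hinv.exp
      have h3l : HasDerivAt (fun y : ℝ => -lam * y) (-lam) x := by
        simpa using (hasDerivAt_id x).const_mul (-lam)
      have h3 : HasDerivAt (fun y : ℝ => Real.exp (-lam * y))
          (Real.exp (-lam * x) * -lam) x := h3l.exp
      have hD := (h1.mul h2).mul h3
      have hEq : φ =ᶠ[nhds x] fun y => y ^ (1 - α) * Real.exp (-β / y) * Real.exp (-lam * y) := by
        filter_upwards [Ioi_mem_nhds hx0] with y hy
        simp only [hφ, if_pos (show (0:ℝ) < y from hy)]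
      refine HasDerivAt.congr_of_eventuallyEq ?_ hEq
      refine hD.congr_deriv (Eq.symm ?_)
      have e2 : x ^ (1 - α) * (β / x ^ 2) = β * x ^ (-α - 1) := by
        have hx2 : (x:ℝ) ^ 2 = x ^ (2:ℝ) := by
          rw [← Real.rpow_natCast x 2]; norm_num
        calc x ^ (1 - α) * (β / x ^ 2) = β * (x ^ (1 - α) * x ^ (-2:ℝ)) := by
              rw [hx2, div_eq_mul_inv, ← Real.rpow_neg hx0.le]; ring
          _ = β * x ^ (-α - 1) := by
              rw [← Real.rpow_add hx0, show (1 - α) + (-2:ℝ) = -α - 1 by ring]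
      rw [hψ, show (1:ℝ) - α - 1 = -α by ring, Pi.mul_apply]
      linear_combination (-(Real.exp (-β / x) * Real.exp (-lam * x))) * e2
    have hIa := (integrable_aux hβ (-α) hlam).const_mul (1 - α)
    have hIb := (integrable_aux hβ (-α - 1) hlam).const_mul β
    have hIc := (integrable_aux hβ (1 - α) hlam).const_mul lam
    have hint : IntegrableOn ψ (Ioi (0:ℝ)) := (hIa.add hIb).sub hIc
    have hcont : ContinuousWithinAt φ (Ici (0:ℝ)) 0 := by
      rw [ContinuousWithinAt, hφ0]
      set n : ℕ := ⌈α⌉₊ with hn'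
      have hq : (0:ℝ) < 1 - α + n := by
        have h := Nat.le_ceil α
        push_cast at h ⊢
        linarith
      apply squeeze_zero_norm
        (a := fun x => (n.factorial : ℝ) / β ^ n * |x| ^ (1 - α + n))
      · intro x
        by_cases hx : 0 < x
        · simp only [hφ, if_pos hx]
          rw [Real.norm_eq_abs, abs_of_nonneg (by positivity), abs_of_pos hx]
          have hE1 : Real.exp (-β / x) ≤ n.factorial / β ^ n * x ^ n :=
            exp_neg_div_le hβ n hx
          have hE2 : Real.exp (-lam * x) ≤ 1 := by
            rw [Real.exp_le_one_iff]; nlinarith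
          have hsplit : x ^ (1 - α + n) = x ^ (1 - α) * x ^ n := by
            rw [← Real.rpow_natCast x n, ← Real.rpow_add hx]
          calc x ^ (1 - α) * Real.exp (-β / x) * Real.exp (-lam * x)
              ≤ x ^ (1 - α) * (n.factorial / β ^ n * x ^ n) * 1 := by
                have := Real.rpow_nonneg hx.le (1 - α)
                gcongr
            _ = n.factorial / β ^ n * x ^ (1 - α + n) := by rw [hsplit]; ring
        · simp only [hφ, if_neg hx]
          rw [norm_zero]
          positivity
      · have hcA : ContinuousAt (fun x : ℝ => (n.factorial : ℝ) / β ^ n * |x| ^ (1 - α + n)) 0 :=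
          continuousAt_const.mul (continuous_abs.continuousAt.rpow_const (Or.inr hq.le))
        have h0 : (n.factorial : ℝ) / β ^ n * |(0:ℝ)| ^ (1 - α + n) = 0 := by
          simp [Real.zero_rpow hq.ne']
        exact (h0 ▸ hcA.tendsto).mono_left nhdsWithin_le_nhds
    have htop : Tendsto φ atTop (nhds 0) := by
      apply squeeze_zero_norm' (a := fun x => x ^ (1 - α) * Real.exp (-lam * x))
      · filter_upwards [eventually_gt_atTop (0:ℝ)] with x hx
        simp only [hφ, if_pos hx]
        rw [Real.norm_eq_abs, abs_of_nonneg (by positivity)]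
        have hE1 : Real.exp (-β / x) ≤ 1 := by
          rw [Real.exp_le_one_iff]
          rw [neg_div]
          simp only [neg_nonpos]
          positivity
        calc x ^ (1 - α) * Real.exp (-β / x) * Real.exp (-lam * x)
            ≤ x ^ (1 - α) * 1 * Real.exp (-lam * x) := by
              have := Real.rpow_nonneg hx.le (1 - α)
              gcongr
          _ = x ^ (1 - α) * Real.exp (-lam * x) := by ring
      · exact tendsto_rpow_mul_exp_neg_mul_atTop_nhds_zero (1 - α) lam hlam
    have H := MeasureTheory.integral_Ioi_of_hasDerivAt_of_tendsto hcont hderiv hint htop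
    rw [hφ0, sub_zero] at H
    simp only [hψ] at H
    have hab : MeasureTheory.Integrable (fun x : ℝ =>
        (1 - α) * (x ^ (-α) * Real.exp (-β / x) * Real.exp (-lam * x))
        + β * (x ^ (-α - 1) * Real.exp (-β / x) * Real.exp (-lam * x)))
        (volume.restrict (Ioi 0)) := hIa.add hIb
    rw [MeasureTheory.integral_sub hab hIc,
      MeasureTheory.integral_add hIa hIb,
      MeasureTheory.integral_const_mul, MeasureTheory.integral_const_mul,
      MeasureTheory.integral_const_mul] at H
    simp only [hG]
    exact H
  constructor
  · intro lam hlam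
    set C : ℝ := β ^ α / Real.Gamma α with hC
    have hG1 : ∀ l : ℝ, 0 < l → HasDerivAt (fun y => C * G (-α - 1) y) (C * -G (-α) l) l := by
      intro l hl
      have h := hasDerivAt_G hβ (-α - 1) hl
      rw [show -α - 1 + 1 = -α by ring] at h
      exact h.const_mul C
    have hG2 : ∀ l : ℝ, 0 < l →
        HasDerivAt (fun y => C * -G (-α) y) (C * G (1 - α) l) l := by
      intro l hl
      have h := (hasDerivAt_G hβ (-α) hl).neg
      rw [show -α + 1 = 1 - α by ring, neg_neg] at h
      exact h.const_mul C
    have hderiv1 : ∀ l : ℝ, 0 < l → deriv f l = C * -G (-α) l := by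
      intro l hl
      have hEq : f =ᶠ[nhds l] fun y => C * G (-α - 1) y := by
        filter_upwards [Ioi_mem_nhds hl] with y hy using hrep y hy
      exact (HasDerivAt.congr_of_eventuallyEq (hG1 l hl) hEq).deriv
    have hderiv2 : deriv (deriv f) lam = C * G (1 - α) lam := by
      have hEq : deriv f =ᶠ[nhds lam] fun y => C * -G (-α) y := by
        filter_upwards [Ioi_mem_nhds hlam] with y hy using hderiv1 y hy
      exact (HasDerivAt.congr_of_eventuallyEq (hG2 lam hlam) hEq).deriv
    rw [hderiv2, hderiv1 lam hlam, hrep lam hlam]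
    have h := hftc lam hlam
    linear_combination (-C) * h
  · intro lam hlam
    rw [hrep lam hlam]
    have hpt : ∀ x : ℝ, Real.exp (-lam * x) * g x =
        β ^ α / Real.Gamma α * (x ^ (-α - 1) * Real.exp (-β / x) * Real.exp (-lam * x)) := by
      intro x; rw [hg]; ring
    simp only [hpt]
    rw [MeasureTheory.integral_const_mul]

end
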